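/- arXiv:2605.11865 — 3 statements merged into one kernel-verified Lean document; each statement's English description precedes it below -/
import Mathlib

section
/- Fix thresholds τ₁ < τ₂ and define the two-anchor map Γ(r, g) = (Φ((r - τ₁)·e^{-g}), Φ((r - τ₂)·e^{-g})) from ℝ² to (0,1)². Then the Jacobian determinant of Γ at (r, g) equals φ(z₁)·φ(z₂)·e^{-2g}·(τ₂ - τ₁), where z_k = (r - τ_k)·e^{-g} and φ is the standard normal density. In particular, the Jacobian determinant is strictly positive everywhere. -/
noncomputable def stdGaussianPDF (t : ℝ) : ℝ :=
  (Real.sqrt (2 * Real.pi))⁻¹ * Real.exp (-t ^ 2 / 2)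

noncomputable def stdGaussianCDF (x : ℝ) : ℝ :=
  ∫ t in Set.Iic x, stdGaussianPDF t

/-- The two-anchor map `Γ(r,g) = (Φ((r-τ₁)e^{-g}), Φ((r-τ₂)e^{-g}))`. -/
noncomputable def twoAnchorMap (τ₁ τ₂ : ℝ) (p : ℝ × ℝ) : ℝ × ℝ :=
  (stdGaussianCDF ((p.1 - τ₁) * Real.exp (-p.2)),
   stdGaussianCDF ((p.1 - τ₂) * Real.exp (-p.2)))

lemma pdf_pos (t : ℝ) : 0 < stdGaussianPDF t := by
  unfold stdGaussianPDF
  positivity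

lemma pdf_cont : Continuous stdGaussianPDF := by
  unfold stdGaussianPDF
  fun_prop

lemma pdf_integrable : MeasureTheory.Integrable stdGaussianPDF := by
  unfold stdGaussianPDF
  apply MeasureTheory.Integrable.const_mul
  have h := integrable_exp_neg_mul_sq (b := (1/2 : ℝ)) (by norm_num)
  convert h using 2 with t
  ring_nf

lemma cdf_hasDerivAt (x : ℝ) : HasDerivAt stdGaussianCDF (stdGaussianPDF x) x := by
  have key : ∀ y, stdGaussianCDF y = stdGaussianCDF 0 + ∫ t in (0:ℝ)..y, stdGaussianPDF t := by
    intro y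
    have := intervalIntegral.integral_Iic_sub_Iic (μ := MeasureTheory.volume)
      (pdf_integrable.integrableOn) (pdf_integrable.integrableOn) (a := 0) (b := y)
    unfold stdGaussianCDF
    linarith [this]
  have h : HasDerivAt (fun y => stdGaussianCDF 0 + ∫ t in (0:ℝ)..y, stdGaussianPDF t)
      (stdGaussianPDF x) x := by
    apply HasDerivAt.const_add
    exact intervalIntegral.integral_hasDerivAt_right
      (pdf_cont.intervalIntegrable _ _)
      (pdf_cont.stronglyMeasurable.stronglyMeasurableAtFilter)
      pdf_cont.continuousAt
  exact h.congr_deriv rfl |>.congr_of_eventuallyEq (Filter.Eventually.of_forall fun y => (key y))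

open ContinuousLinearMap in
noncomputable def Lmap (a b : ℝ) : ℝ × ℝ →L[ℝ] ℝ :=
  a • fst ℝ ℝ ℝ + b • snd ℝ ℝ ℝ

lemma det_prod (a b c d : ℝ) : ((Lmap a b).prod (Lmap c d)).det = a * d - b * c := by
  rw [ContinuousLinearMap.det]
  rw [← LinearMap.det_toMatrix (Module.Basis.finTwoProd ℝ)]
  rw [Matrix.det_fin_two]
  simp [LinearMap.toMatrix_apply, Lmap]

lemma comp_hasFDerivAt (τ r g : ℝ) :
    HasFDerivAt (fun p : ℝ × ℝ => stdGaussianCDF ((p.1 - τ) * Real.exp (-p.2)))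
      (Lmap (stdGaussianPDF ((r - τ) * Real.exp (-g)) * Real.exp (-g))
            (-(stdGaussianPDF ((r - τ) * Real.exp (-g)) * ((r - τ) * Real.exp (-g)))))
      (r, g) := by
  have h1 : HasFDerivAt (fun p : ℝ × ℝ => p.1 - τ) (ContinuousLinearMap.fst ℝ ℝ ℝ) (r, g) :=
    (hasFDerivAt_fst).sub_const τ
  have h2 : HasFDerivAt (fun p : ℝ × ℝ => Real.exp (-p.2))
      (Real.exp (-g) • (-ContinuousLinearMap.snd ℝ ℝ ℝ)) (r, g) :=
    by
      have hs : HasFDerivAt (fun p : ℝ × ℝ => -p.2) (-ContinuousLinearMap.snd ℝ ℝ ℝ) (r, g) :=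
        hasFDerivAt_snd.neg
      exact (Real.hasDerivAt_exp (-g)).comp_hasFDerivAt ((r, g) : ℝ × ℝ) hs
  have hu := h1.mul h2
  have hc := (cdf_hasDerivAt ((r - τ) * Real.exp (-g))).comp_hasFDerivAt (r, g) hu
  refine hc.congr_fderiv ?_
  ext <;> simp [Lmap]


theorem two_anchor_jacobian_det (τ₁ τ₂ : ℝ) (hτ : τ₁ < τ₂) (r g : ℝ) :
    (fderiv ℝ (twoAnchorMap τ₁ τ₂) (r, g)).det
      = stdGaussianPDF ((r - τ₁) * Real.exp (-g)) * stdGaussianPDF ((r - τ₂) * Real.exp (-g))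
          * Real.exp (-(2 * g)) * (τ₂ - τ₁) ∧
    0 < (fderiv ℝ (twoAnchorMap τ₁ τ₂) (r, g)).det := by
  have hF := HasFDerivAt.prodMk (comp_hasFDerivAt τ₁ r g) (comp_hasFDerivAt τ₂ r g)
  have hF' : HasFDerivAt (twoAnchorMap τ₁ τ₂) _ (r, g) := hF
  have heq : (fderiv ℝ (twoAnchorMap τ₁ τ₂) (r, g)).det
      = stdGaussianPDF ((r - τ₁) * Real.exp (-g)) * stdGaussianPDF ((r - τ₂) * Real.exp (-g))
          * Real.exp (-(2 * g)) * (τ₂ - τ₁) := by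
    rw [hF'.fderiv, det_prod]
    rw [show Real.exp (-(2 * g)) = Real.exp (-g) * Real.exp (-g) by
      rw [← Real.exp_add]; ring_nf]
    ring
  exact ⟨heq, heq ▸
    mul_pos (mul_pos (mul_pos (pdf_pos _) (pdf_pos _)) (Real.exp_pos _)) (sub_pos.mpr hτ)⟩
end

section
/- Fix τ₁ < τ₂, B_Θ > 0, and let r, g, r*, g* : U → ℝ be functions bounded by B_Θ in sup norm. Define q_k(u) = Φ((r(u) - τ_k)e^{-g(u)}) and q_k*(u) = Φ((r*(u) - τ_k)e^{-g*(u)}). Then there exists a constant c > 0, depending only on B_Θ, τ₁, τ₂, such that for every u: |r(u) - r*(u)|² + |g(u) - g*(u)|² ≤ c·(|q₁(u) - q₁*(u)|² + |q₂(u) - q₂*(u)|²). -/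
set_option maxHeartbeats 800000

lemma pdf_ge {M t : ℝ} (h1 : -M ≤ t) (h2 : t ≤ M) : stdGaussianPDF M ≤ stdGaussianPDF t := by
  unfold stdGaussianPDF
  have h : Real.exp (-M ^ 2 / 2) ≤ Real.exp (-t ^ 2 / 2) := by
    apply Real.exp_le_exp.mpr
    nlinarith [sq_le_sq' h1 h2]
  have : (0:ℝ) ≤ (Real.sqrt (2 * Real.pi))⁻¹ := by positivity
  nlinarith

lemma cdf_lower {M x y : ℝ} (hy : -M ≤ y) (hx : x ≤ M) (h : y ≤ x) :
    stdGaussianPDF M * (x - y) ≤ stdGaussianCDF x - stdGaussianCDF y := by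
  have hint := pdf_integrable
  have heq : stdGaussianCDF x - stdGaussianCDF y = ∫ t in y..x, stdGaussianPDF t :=
    intervalIntegral.integral_Iic_sub_Iic hint.integrableOn hint.integrableOn
  rw [heq]
  have : stdGaussianPDF M * (x - y) = ∫ _t in y..x, stdGaussianPDF M := by
    rw [intervalIntegral.integral_const]; ring_nf
  rw [this]
  apply intervalIntegral.integral_mono_on h intervalIntegrable_const
    (MeasureTheory.IntegrableOn.intervalIntegrable hint.integrableOn)
  intro t ht
  exact pdf_ge (le_trans hy ht.1) (le_trans ht.2 hx)

lemma sum_sq_le_two (x y : ℝ) : (x + y) ^ 2 ≤ 2 * (x ^ 2 + y ^ 2) := by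
  nlinarith [sq_nonneg (x - y)]

lemma cdf_abs_lower {M x y : ℝ} (hx : |x| ≤ M) (hy : |y| ≤ M) :
    stdGaussianPDF M * |x - y| ≤ |stdGaussianCDF x - stdGaussianCDF y| := by
  obtain ⟨hx1, hx2⟩ := abs_le.mp hx
  obtain ⟨hy1, hy2⟩ := abs_le.mp hy
  have hm := pdf_pos M
  rcases le_total y x with h | h
  · have h1 := cdf_lower hy1 hx2 h
    have h2 : 0 ≤ stdGaussianPDF M * (x - y) := mul_nonneg (le_of_lt hm) (by linarith)
    rw [abs_of_nonneg (by linarith), abs_of_nonneg (by linarith)]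
    exact h1
  · have h1 := cdf_lower hx1 hy2 h
    have h2 : 0 ≤ stdGaussianPDF M * (y - x) := mul_nonneg (le_of_lt hm) (by linarith)
    rw [abs_sub_comm x y, abs_sub_comm (stdGaussianCDF x), abs_of_nonneg (by linarith),
      abs_of_nonneg (by linarith)]
    exact h1

lemma exp_sub_lower {a b B : ℝ} (ha : -B ≤ a) (hb : -B ≤ b) :
    Real.exp (-B) * |a - b| ≤ |Real.exp a - Real.exp b| := by
  wlog h : b ≤ a generalizing a b
  · rw [abs_sub_comm a b, abs_sub_comm (Real.exp a)]
    exact this hb ha (le_of_not_ge h)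
  have h1 : Real.exp b * (a - b) ≤ Real.exp a - Real.exp b := by
    have := Real.add_one_le_exp (a - b)
    have heq : Real.exp a = Real.exp b * Real.exp (a - b) := by
      rw [← Real.exp_add]; ring_nf
    nlinarith [Real.exp_pos b]
  have h2 : Real.exp (-B) ≤ Real.exp b := Real.exp_le_exp.mpr hb
  rw [abs_of_nonneg (by linarith), abs_of_nonneg (by
    nlinarith [Real.exp_pos b, Real.exp_pos (-B)])]
  nlinarith [Real.exp_pos (-B)]

lemma exp_sub_upper {a b B : ℝ} (ha : a ≤ B) (hb : b ≤ B) :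
    |Real.exp a - Real.exp b| ≤ Real.exp B * |a - b| := by
  wlog h : b ≤ a generalizing a b
  · rw [abs_sub_comm a b, abs_sub_comm (Real.exp a)]
    exact this hb ha (le_of_not_ge h)
  have h1 : Real.exp a - Real.exp b ≤ Real.exp a * (a - b) := by
    have := Real.add_one_le_exp (b - a)
    have heq : Real.exp b = Real.exp a * Real.exp (b - a) := by
      rw [← Real.exp_add]; ring_nf
    nlinarith [Real.exp_pos a]
  have h2 : Real.exp a ≤ Real.exp B := Real.exp_le_exp.mpr ha
  have h3 : Real.exp b ≤ Real.exp a := Real.exp_le_exp.mpr h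
  rw [abs_of_nonneg (by linarith), abs_of_nonneg (by linarith)]
  nlinarith [Real.exp_pos a]

theorem two_anchor_inverse_lipschitz (τ₁ τ₂ B : ℝ) (hτ : τ₁ < τ₂) (hB : 0 < B) :
    ∃ c > 0, ∀ (U : Type) (r g r' g' : U → ℝ),
      (∀ u, |r u| ≤ B) → (∀ u, |g u| ≤ B) →
      (∀ u, |r' u| ≤ B) → (∀ u, |g' u| ≤ B) →
      ∀ u : U,
        |r u - r' u| ^ 2 + |g u - g' u| ^ 2
          ≤ c * (|stdGaussianCDF ((r u - τ₁) * Real.exp (-(g u)))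
                    - stdGaussianCDF ((r' u - τ₁) * Real.exp (-(g' u)))| ^ 2
                + |stdGaussianCDF ((r u - τ₂) * Real.exp (-(g u)))
                    - stdGaussianCDF ((r' u - τ₂) * Real.exp (-(g' u)))| ^ 2) := by
  set T : ℝ := max |τ₁| |τ₂| with hT
  set M : ℝ := (B + T) * Real.exp B with hM
  set m : ℝ := stdGaussianPDF M with hm
  have hm0 : 0 < m := pdf_pos M
  have hτ0 : 0 < τ₂ - τ₁ := by linarith
  set K₁ : ℝ := Real.exp B / (τ₂ - τ₁) with hK₁
  set K₂ : ℝ := Real.exp B + M * Real.exp B * K₁ with hK₂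
  have hK₁0 : 0 < K₁ := by positivity
  have hM0 : 0 < M := by
    have : 0 ≤ T := le_trans (abs_nonneg τ₁) (le_max_left _ _)
    positivity
  have hK₂0 : 0 < K₂ := by positivity
  refine ⟨2 * (K₁ ^ 2 + K₂ ^ 2) / m ^ 2, by positivity, ?_⟩
  intro U r g r' g' hr hg hr' hg' u
  set z₁ : ℝ := (r u - τ₁) * Real.exp (-(g u)) with hz₁
  set z₂ : ℝ := (r u - τ₂) * Real.exp (-(g u)) with hz₂
  set w₁ : ℝ := (r' u - τ₁) * Real.exp (-(g' u)) with hw₁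
  set w₂ : ℝ := (r' u - τ₂) * Real.exp (-(g' u)) with hw₂
  -- bounds on z, w
  have hbound : ∀ (ρ γ τ : ℝ), |ρ| ≤ B → |γ| ≤ B → |τ| ≤ T →
      |(ρ - τ) * Real.exp (-γ)| ≤ M := by
    intro ρ γ τ hρ hγ hτ'
    rw [abs_mul, abs_of_pos (Real.exp_pos _)]
    have h1 : |ρ - τ| ≤ B + T := by
      have h0 : |ρ - τ| ≤ |ρ| + |τ| := abs_sub _ _
      linarith
    have h2 : Real.exp (-γ) ≤ Real.exp B := by
      apply Real.exp_le_exp.mpr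
      have := abs_le.mp hγ; linarith
    rw [hM]
    exact mul_le_mul h1 h2 (le_of_lt (Real.exp_pos _)) (by linarith [abs_nonneg (ρ - τ)])
  have hz₁M : |z₁| ≤ M := hbound _ _ _ (hr u) (hg u) (le_max_left _ _)
  have hz₂M : |z₂| ≤ M := hbound _ _ _ (hr u) (hg u) (le_max_right _ _)
  have hw₁M : |w₁| ≤ M := hbound _ _ _ (hr' u) (hg' u) (le_max_left _ _)
  have hw₂M : |w₂| ≤ M := hbound _ _ _ (hr' u) (hg' u) (le_max_right _ _)
  set d₁ : ℝ := z₁ - w₁ with hd₁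
  set d₂ : ℝ := z₂ - w₂ with hd₂
  set e₁ : ℝ := |stdGaussianCDF z₁ - stdGaussianCDF w₁| with he₁
  set e₂ : ℝ := |stdGaussianCDF z₂ - stdGaussianCDF w₂| with he₂
  have hcd₁ : m * |d₁| ≤ e₁ := cdf_abs_lower hz₁M hw₁M
  have hcd₂ : m * |d₂| ≤ e₂ := cdf_abs_lower hz₂M hw₂M
  -- g stability
  have hgB := abs_le.mp (hg u)
  have hg'B := abs_le.mp (hg' u)
  have hkey : d₁ - d₂ = (τ₂ - τ₁) * (Real.exp (-(g u)) - Real.exp (-(g' u))) := by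
    rw [hd₁, hd₂, hz₁, hz₂, hw₁, hw₂]; ring
  have hglow : Real.exp (-B) * |g u - g' u| ≤ |Real.exp (-(g u)) - Real.exp (-(g' u))| := by
    have := exp_sub_lower (a := -(g u)) (b := -(g' u)) (B := B)
      (by linarith) (by linarith)
    have habs : |(-(g u)) - (-(g' u))| = |g u - g' u| := by
      rw [show -(g u) - -(g' u) = g' u - g u by ring, abs_sub_comm]
    rwa [habs] at this
  have hgd : |g u - g' u| ≤ K₁ * (|d₁| + |d₂|) := by
    have h1 : |Real.exp (-(g u)) - Real.exp (-(g' u))| = |d₁ - d₂| / (τ₂ - τ₁) := by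
      rw [hkey, abs_mul, abs_of_pos hτ0]
      field_simp
    have h2 : |d₁ - d₂| ≤ |d₁| + |d₂| := abs_sub _ _
    have h3 : Real.exp (-B) * Real.exp B = 1 := by rw [← Real.exp_add]; simp
    have hEB : 0 < Real.exp B := Real.exp_pos B
    have hEnB : 0 < Real.exp (-B) := Real.exp_pos (-B)
    rw [h1] at hglow
    rw [hK₁]
    rw [div_mul_eq_mul_div, le_div_iff₀ hτ0]
    calc |g u - g' u| * (τ₂ - τ₁)
        = Real.exp B * (Real.exp (-B) * |g u - g' u|) * (τ₂ - τ₁) := by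
          rw [← mul_assoc, mul_comm (Real.exp B), mul_assoc, h3]; ring
      _ ≤ Real.exp B * (|d₁ - d₂| / (τ₂ - τ₁)) * (τ₂ - τ₁) := by gcongr
      _ = Real.exp B * |d₁ - d₂| := by field_simp
      _ ≤ Real.exp B * (|d₁| + |d₂|) := by gcongr
  -- r stability
  have hinv : Real.exp (-(g u)) * Real.exp (g u) = 1 := by rw [← Real.exp_add]; simp
  have hinv' : Real.exp (-(g' u)) * Real.exp (g' u) = 1 := by rw [← Real.exp_add]; simp
  have hrdec : r u - r' u = d₁ * Real.exp (g u) + w₁ * (Real.exp (g u) - Real.exp (g' u)) := by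
    rw [hd₁, hz₁, hw₁]
    have h1 : (r u - τ₁) * Real.exp (-(g u)) * Real.exp (g u) = r u - τ₁ := by
      rw [mul_assoc, hinv, mul_one]
    have h2 : (r' u - τ₁) * Real.exp (-(g' u)) * Real.exp (g' u) = r' u - τ₁ := by
      rw [mul_assoc, hinv', mul_one]
    linear_combination (τ₁ - r u) * hinv + (r' u - τ₁) * hinv'
  have hexpup : |Real.exp (g u) - Real.exp (g' u)| ≤ Real.exp B * |g u - g' u| :=
    exp_sub_upper hgB.2 hg'B.2
  have hexpgB : Real.exp (g u) ≤ Real.exp B := Real.exp_le_exp.mpr hgB.2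
  have hrd : |r u - r' u| ≤ K₂ * (|d₁| + |d₂|) := by
    calc |r u - r' u|
        ≤ |d₁ * Real.exp (g u)| + |w₁ * (Real.exp (g u) - Real.exp (g' u))| := by
          rw [hrdec]; exact abs_add_le _ _
      _ = |d₁| * Real.exp (g u) + |w₁| * |Real.exp (g u) - Real.exp (g' u)| := by
          rw [abs_mul, abs_mul, abs_of_pos (Real.exp_pos _)]
      _ ≤ |d₁| * Real.exp B + M * (Real.exp B * (K₁ * (|d₁| + |d₂|))) := by
          refine add_le_add (mul_le_mul_of_nonneg_left hexpgB (abs_nonneg _)) ?_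
          calc |w₁| * |Real.exp (g u) - Real.exp (g' u)|
                ≤ M * (Real.exp B * |g u - g' u|) :=
                  mul_le_mul hw₁M hexpup (abs_nonneg _) (by linarith)
              _ ≤ M * (Real.exp B * (K₁ * (|d₁| + |d₂|))) := by gcongr
      _ ≤ (|d₁| + |d₂|) * Real.exp B + M * (Real.exp B * (K₁ * (|d₁| + |d₂|))) :=
          add_le_add (mul_le_mul_of_nonneg_right
            (by linarith [abs_nonneg d₂]) (Real.exp_pos B).le) le_rfl
      _ = K₂ * (|d₁| + |d₂|) := by rw [hK₂]; ring
  -- combine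
  have habs1 : 0 ≤ |d₁| := abs_nonneg _
  have habs2 : 0 ≤ |d₂| := abs_nonneg _
  have hsq1 : (m * |d₁|) ^ 2 ≤ e₁ ^ 2 := by
    apply pow_le_pow_left₀ (by positivity) hcd₁
  have hsq2 : (m * |d₂|) ^ 2 ≤ e₂ ^ 2 := by
    apply pow_le_pow_left₀ (by positivity) hcd₂
  have hs2 : (|d₁| + |d₂|) ^ 2 ≤ 2 * (|d₁| ^ 2 + |d₂| ^ 2) := sum_sq_le_two _ _
  have ha2 : |r u - r' u| ^ 2 ≤ K₂ ^ 2 * (|d₁| + |d₂|) ^ 2 := by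
    rw [← mul_pow]
    exact pow_le_pow_left₀ (abs_nonneg _) hrd 2
  have hb2 : |g u - g' u| ^ 2 ≤ K₁ ^ 2 * (|d₁| + |d₂|) ^ 2 := by
    rw [← mul_pow]
    exact pow_le_pow_left₀ (abs_nonneg _) hgd 2
  rw [div_mul_eq_mul_div, le_div_iff₀ (by positivity : (0:ℝ) < m ^ 2)]
  have hmain : m ^ 2 * (|d₁| ^ 2 + |d₂| ^ 2) ≤ e₁ ^ 2 + e₂ ^ 2 := by
    have h1 : m ^ 2 * |d₁| ^ 2 ≤ e₁ ^ 2 := by rw [← mul_pow]; exact hsq1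
    have h2 : m ^ 2 * |d₂| ^ 2 ≤ e₂ ^ 2 := by rw [← mul_pow]; exact hsq2
    linarith
  have hstep : |r u - r' u| ^ 2 + |g u - g' u| ^ 2
      ≤ (K₁ ^ 2 + K₂ ^ 2) * (|d₁| + |d₂|) ^ 2 := by
    rw [add_comm (K₁ ^ 2), add_mul]; exact add_le_add ha2 hb2
  calc (|r u - r' u| ^ 2 + |g u - g' u| ^ 2) * m ^ 2
      ≤ ((K₁ ^ 2 + K₂ ^ 2) * (|d₁| + |d₂|) ^ 2) * m ^ 2 :=
        mul_le_mul_of_nonneg_right hstep (by positivity)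
    _ ≤ ((K₁ ^ 2 + K₂ ^ 2) * (2 * (|d₁| ^ 2 + |d₂| ^ 2))) * m ^ 2 :=
        mul_le_mul_of_nonneg_right
          (mul_le_mul_of_nonneg_left hs2 (by positivity)) (by positivity)
    _ = 2 * (K₁ ^ 2 + K₂ ^ 2) * (m ^ 2 * (|d₁| ^ 2 + |d₂| ^ 2)) := by ring
    _ ≤ 2 * (K₁ ^ 2 + K₂ ^ 2) * (e₁ ^ 2 + e₂ ^ 2) :=
        mul_le_mul_of_nonneg_left hmain (by positivity)
end

section
/- Let τ₁ < τ₂, B_Θ > 0, and (r, g), (r*, g*) ∈ [-B_Θ, B_Θ]². With π and π* the three-class probability vectors induced by the two anchors as above, there is a constant C > 0, depending only on B_Θ, τ₁, τ₂, such that KL(π* ‖ π) ≤ C·((r - r*)² + (g - g*)²). -/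
/-- The three threshold-induced class probabilities for parameters `(r, g)`. -/
noncomputable def classProb (τ₁ τ₂ r g : ℝ) : Fin 3 → ℝ
  | 0 => 1 - stdGaussianCDF ((r - τ₁) * Real.exp (-g))
  | 1 => stdGaussianCDF ((r - τ₁) * Real.exp (-g)) - stdGaussianCDF ((r - τ₂) * Real.exp (-g))
  | 2 => stdGaussianCDF ((r - τ₂) * Real.exp (-g))

open Real MeasureTheory

lemma sqrt2pi_pos : 0 < Real.sqrt (2 * Real.pi) :=
  Real.sqrt_pos.mpr (by positivity)

lemma sqrt2pi_ge_one : 1 ≤ Real.sqrt (2 * Real.pi) := by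
  rw [show (1:ℝ) = Real.sqrt 1 by simp]
  exact Real.sqrt_le_sqrt (by nlinarith [Real.pi_gt_three])

lemma pdf_nonneg (t : ℝ) : 0 ≤ stdGaussianPDF t := by
  unfold stdGaussianPDF; positivity

lemma pdf_le (t : ℝ) : stdGaussianPDF t ≤ (Real.sqrt (2 * Real.pi))⁻¹ := by
  unfold stdGaussianPDF
  exact mul_le_of_le_one_right (by positivity)
    (Real.exp_le_one_iff.mpr (by nlinarith [sq_nonneg t]))

lemma pdf_integrable_s19 : Integrable stdGaussianPDF := by
  have h := (integrable_exp_neg_mul_sq (by norm_num : (0:ℝ) < 1/2)).const_mul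
    (Real.sqrt (2 * Real.pi))⁻¹
  convert h using 2 with t
  unfold stdGaussianPDF
  ring_nf

lemma integral_pdf : ∫ t, stdGaussianPDF t = 1 := by
  have h : ∫ t : ℝ, Real.exp (-(1/2) * t ^ 2) = Real.sqrt (Real.pi / (1/2)) :=
    integral_gaussian (1/2)
  have h2 : ∫ t, stdGaussianPDF t
      = (Real.sqrt (2 * Real.pi))⁻¹ * ∫ t : ℝ, Real.exp (-(1/2) * t ^ 2) := by
    rw [← integral_const_mul]
    congr 1 with t
    unfold stdGaussianPDF
    ring_nf
  rw [h2, h, show Real.pi / (1/2) = 2 * Real.pi by ring]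
  field_simp

lemma cdf_nonneg (x : ℝ) : 0 ≤ stdGaussianCDF x :=
  setIntegral_nonneg measurableSet_Iic fun t _ => pdf_nonneg t

lemma cdf_le_one (x : ℝ) : stdGaussianCDF x ≤ 1 := by
  rw [← integral_pdf]
  exact setIntegral_le_integral pdf_integrable_s19 (Filter.Eventually.of_forall pdf_nonneg)

lemma cdf_sub {a b : ℝ} (hab : a ≤ b) :
    stdGaussianCDF b - stdGaussianCDF a = ∫ t in Set.Ioc a b, stdGaussianPDF t := by
  have hu : Set.Iic a ∪ Set.Ioc a b = Set.Iic b := Set.Iic_union_Ioc_eq_Iic hab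
  have h := setIntegral_union (f := stdGaussianPDF) (μ := volume)
    (s := Set.Iic a) (t := Set.Ioc a b) (Set.Iic_disjoint_Ioc le_rfl) measurableSet_Ioc
    pdf_integrable_s19.integrableOn pdf_integrable_s19.integrableOn
  unfold stdGaussianCDF
  rw [← hu, h]
  ring

lemma cdf_mono {a b : ℝ} (hab : a ≤ b) : stdGaussianCDF a ≤ stdGaussianCDF b := by
  have h := setIntegral_nonneg (μ := volume) (f := stdGaussianPDF) (s := Set.Ioc a b)
    measurableSet_Ioc (fun t _ => pdf_nonneg t)
  have := cdf_sub hab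
  linarith

lemma cdf_lip (a b : ℝ) :
    |stdGaussianCDF a - stdGaussianCDF b| ≤ |a - b| := by
  wlog hab : b ≤ a with H
  · rw [abs_sub_comm, abs_sub_comm a b]; exact H b a (le_of_not_ge hab)
  rw [abs_of_nonneg (by linarith [cdf_mono hab]), abs_of_nonneg (by linarith)]
  rw [cdf_sub hab]
  calc ∫ t in Set.Ioc b a, stdGaussianPDF t
      ≤ ∫ _ in Set.Ioc b a, (Real.sqrt (2 * Real.pi))⁻¹ :=
        setIntegral_mono_on pdf_integrable_s19.integrableOn (integrableOn_const
          measure_Ioc_lt_top.ne) measurableSet_Ioc fun t _ => pdf_le t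
    _ = (a - b) * (Real.sqrt (2 * Real.pi))⁻¹ := by
        rw [setIntegral_const]
        simp only [Real.volume_Ioc, ENNReal.toReal_ofReal (by linarith : (0:ℝ) ≤ a - b),
          smul_eq_mul, Real.volume_real_Ioc, max_eq_left (by linarith : (0:ℝ) ≤ a - b)]
    _ ≤ (a - b) * 1 := by
        gcongr
        exact inv_le_one_of_one_le₀ sqrt2pi_ge_one
    _ = a - b := by ring

lemma cdf_gap {a b R : ℝ} (hab : a ≤ b) (ha : -R ≤ a) (hb : b ≤ R) :
    (b - a) * ((Real.sqrt (2 * Real.pi))⁻¹ * Real.exp (-R ^ 2 / 2))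
      ≤ stdGaussianCDF b - stdGaussianCDF a := by
  rw [cdf_sub hab]
  calc (b - a) * ((Real.sqrt (2 * Real.pi))⁻¹ * Real.exp (-R ^ 2 / 2))
      = ∫ _ in Set.Ioc a b, ((Real.sqrt (2 * Real.pi))⁻¹ * Real.exp (-R ^ 2 / 2)) := by
        rw [setIntegral_const]
        simp only [Real.volume_Ioc, ENNReal.toReal_ofReal (by linarith : (0:ℝ) ≤ b - a),
          smul_eq_mul, Real.volume_real_Ioc, max_eq_left (by linarith : (0:ℝ) ≤ b - a)]
    _ ≤ ∫ t in Set.Ioc a b, stdGaussianPDF t := by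
        refine setIntegral_mono_on (integrableOn_const measure_Ioc_lt_top.ne)
          pdf_integrable_s19.integrableOn measurableSet_Ioc fun t ht => ?_
        unfold stdGaussianPDF
        have ht2 : t ^ 2 ≤ R ^ 2 := sq_le_sq' (by linarith [ht.1]) (le_trans ht.2 hb)
        gcongr

lemma exp_lip {x y B' : ℝ} (hx : x ≤ B') (hy : y ≤ B') :
    |Real.exp x - Real.exp y| ≤ Real.exp B' * |x - y| := by
  wlog hxy : y ≤ x with H
  · rw [abs_sub_comm, abs_sub_comm x y]; exact H hy hx (le_of_not_ge hxy)
  rw [abs_of_nonneg (by simp [Real.exp_le_exp, hxy] : (0:ℝ) ≤ Real.exp x - Real.exp y),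
    abs_of_nonneg (by linarith)]
  have h1 : (y - x) + 1 ≤ Real.exp (y - x) := Real.add_one_le_exp _
  have h2 : Real.exp y = Real.exp x * Real.exp (y - x) := by
    rw [← Real.exp_add]; ring_nf
  have h3 : Real.exp x ≤ Real.exp B' := Real.exp_le_exp.mpr hx
  have h4 : 0 < Real.exp x := Real.exp_pos x
  nlinarith

lemma kl_term {p q : ℝ} (hp : 0 < p) (hq : 0 < q) :
    p * Real.log (p / q) ≤ (p - q) ^ 2 / q + (p - q) := by
  have h := Real.log_le_sub_one_of_pos (div_pos hp hq)
  have h2 : p * Real.log (p / q) ≤ p * (p / q - 1) :=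
    mul_le_mul_of_nonneg_left h hp.le
  have h3 : p * (p / q - 1) = (p - q) ^ 2 / q + (p - q) := by
    field_simp; ring
  linarith

lemma lb_tail {x R : ℝ} (hx : |x| ≤ R - 1) :
    (Real.sqrt (2 * Real.pi))⁻¹ * Real.exp (-R ^ 2 / 2) ≤ 1 - stdGaussianCDF x := by
  obtain ⟨h1, h2⟩ := abs_le.mp hx
  have h := cdf_gap (a := x) (b := x + 1) (R := R) (by linarith) (by linarith) (by linarith)
  have h3 := cdf_le_one (x + 1)
  nlinarith

lemma lb_cdf {x R : ℝ} (hx : |x| ≤ R - 1) :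
    (Real.sqrt (2 * Real.pi))⁻¹ * Real.exp (-R ^ 2 / 2) ≤ stdGaussianCDF x := by
  obtain ⟨h1, h2⟩ := abs_le.mp hx
  have h := cdf_gap (a := x - 1) (b := x) (R := R) (by linarith) (by linarith) (by linarith)
  have h3 := cdf_nonneg (x - 1)
  nlinarith

lemma arg_lip {τ B r g rs gs : ℝ} (hr : |r| ≤ B) (hg : |g| ≤ B)
    (hrs : |rs| ≤ B) (hgs : |gs| ≤ B) :
    |(rs - τ) * Real.exp (-gs) - (r - τ) * Real.exp (-g)|
      ≤ (1 + B + |τ|) * Real.exp (B) * (|r - rs| + |g - gs|) := by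
  obtain ⟨hg1, hg2⟩ := abs_le.mp hg
  obtain ⟨hgs1, hgs2⟩ := abs_le.mp hgs
  have key : (rs - τ) * Real.exp (-gs) - (r - τ) * Real.exp (-g)
      = (rs - r) * Real.exp (-gs) + (r - τ) * (Real.exp (-gs) - Real.exp (-g)) := by ring
  have hE : Real.exp (-gs) ≤ Real.exp B := Real.exp_le_exp.mpr (by linarith)
  have hlip : |Real.exp (-gs) - Real.exp (-g)| ≤ Real.exp B * |g - gs| := by
    have h := exp_lip (x := -gs) (y := -g) (B' := B) (by linarith) (by linarith)
    rw [show (-gs - -g) = g - gs by ring] at h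
    exact h
  have hτ : |r - τ| ≤ B + |τ| := by
    calc |r - τ| ≤ |r| + |τ| := abs_sub _ _
      _ ≤ B + |τ| := by linarith
  have hEpos : (0:ℝ) < Real.exp B := Real.exp_pos B
  have h1 : 0 ≤ |r - rs| := abs_nonneg _
  have h2 : 0 ≤ |g - gs| := abs_nonneg _
  have h3 : 0 ≤ |τ| := abs_nonneg _
  calc |(rs - τ) * Real.exp (-gs) - (r - τ) * Real.exp (-g)|
      ≤ |(rs - r) * Real.exp (-gs)| + |(r - τ) * (Real.exp (-gs) - Real.exp (-g))| := by
        rw [key]; exact abs_add_le _ _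
    _ = |rs - r| * Real.exp (-gs) + |r - τ| * |Real.exp (-gs) - Real.exp (-g)| := by
        rw [abs_mul, abs_mul, abs_of_pos (Real.exp_pos _)]
    _ ≤ |r - rs| * Real.exp B + (B + |τ|) * (Real.exp B * |g - gs|) := by
        rw [abs_sub_comm rs r]
        exact add_le_add (mul_le_mul_of_nonneg_left hE h1)
          (mul_le_mul hτ hlip (abs_nonneg _) (by linarith))
    _ ≤ (1 + B + |τ|) * Real.exp B * (|r - rs| + |g - gs|) := by
        nlinarith [mul_nonneg (mul_nonneg (by linarith : (0:ℝ) ≤ B + |τ|) h1) hEpos.le,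
          mul_nonneg h2 hEpos.le]

lemma arg_bound {τ B r g T : ℝ} (hr : |r| ≤ B) (hg : |g| ≤ B) (hτ : |τ| ≤ T) :
    |(r - τ) * Real.exp (-g)| ≤ (B + T) * Real.exp B := by
  rw [abs_mul, abs_of_pos (Real.exp_pos _)]
  have h0 : 0 ≤ B := le_trans (abs_nonneg r) hr
  have h0' : 0 ≤ T := le_trans (abs_nonneg τ) hτ
  have h1 : |r - τ| ≤ B + T := by
    calc |r - τ| ≤ |r| + |τ| := abs_sub _ _
      _ ≤ B + T := by linarith
  have h2 : Real.exp (-g) ≤ Real.exp B := Real.exp_le_exp.mpr (by linarith [abs_le.mp hg])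
  exact mul_le_mul h1 h2 (Real.exp_pos _).le (by linarith)

lemma kl_three {A1 A2 S1 S2 m E : ℝ} (hm : 0 < m)
    (hq0 : m ≤ 1 - A1) (hq1 : m ≤ A1 - A2) (hq2 : m ≤ A2)
    (hp0 : m ≤ 1 - S1) (hp1 : m ≤ S1 - S2) (hp2 : m ≤ S2)
    (hd1 : |S1 - A1| ≤ E) (hd2 : |S2 - A2| ≤ E) :
    (1 - S1) * Real.log ((1 - S1) / (1 - A1))
      + (S1 - S2) * Real.log ((S1 - S2) / (A1 - A2))
      + S2 * Real.log (S2 / A2) ≤ 12 * E ^ 2 / m := by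
  have hE : 0 ≤ E := le_trans (abs_nonneg _) hd1
  obtain ⟨h1l, h1r⟩ := abs_le.mp hd1
  obtain ⟨h2l, h2r⟩ := abs_le.mp hd2
  have k0 := kl_term (p := 1 - S1) (q := 1 - A1) (by linarith) (by linarith)
  have k1 := kl_term (p := S1 - S2) (q := A1 - A2) (by linarith) (by linarith)
  have k2 := kl_term (p := S2) (q := A2) (by linarith) (by linarith)
  have e0 : ((1 - S1) - (1 - A1)) ^ 2 ≤ (2 * E) ^ 2 := by nlinarith
  have e1 : ((S1 - S2) - (A1 - A2)) ^ 2 ≤ (2 * E) ^ 2 := by nlinarith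
  have e2 : (S2 - A2) ^ 2 ≤ (2 * E) ^ 2 := by nlinarith
  have f0 : ((1 - S1) - (1 - A1)) ^ 2 / (1 - A1) ≤ (2 * E) ^ 2 / m :=
    div_le_div₀ (by positivity) e0 hm hq0
  have f1 : ((S1 - S2) - (A1 - A2)) ^ 2 / (A1 - A2) ≤ (2 * E) ^ 2 / m :=
    div_le_div₀ (by positivity) e1 hm hq1
  have f2 : (S2 - A2) ^ 2 / A2 ≤ (2 * E) ^ 2 / m :=
    div_le_div₀ (by positivity) e2 hm hq2
  have hsum : (2 * E) ^ 2 / m * 3 = 12 * E ^ 2 / m := by ring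
  linarith

set_option maxHeartbeats 2000000 in
theorem two_anchor_kl_quadratic_upper (τ₁ τ₂ B : ℝ) (hτ : τ₁ < τ₂) (hB : 0 < B) :
    ∃ C > 0, ∀ r g rs gs : ℝ,
      |r| ≤ B → |g| ≤ B → |rs| ≤ B → |gs| ≤ B →
      (∑ ℓ, classProb τ₁ τ₂ rs gs ℓ *
          Real.log (classProb τ₁ τ₂ rs gs ℓ / classProb τ₁ τ₂ r g ℓ))
        ≤ C * ((r - rs) ^ 2 + (g - gs) ^ 2) := by
  obtain ⟨T, hTdef⟩ : ∃ x : ℝ, x = max |τ₁| |τ₂| := ⟨_, rfl⟩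
  have hT : 0 ≤ T := le_trans (abs_nonneg τ₁) (by rw [hTdef]; exact le_max_left _ _)
  obtain ⟨Mb, hMbdef⟩ : ∃ x : ℝ, x = (B + T) * Real.exp B := ⟨_, rfl⟩
  obtain ⟨R, hRdef⟩ : ∃ x : ℝ, x = Mb + 1 := ⟨_, rfl⟩
  obtain ⟨E0, hE0def⟩ : ∃ x : ℝ, x = (Real.sqrt (2 * Real.pi))⁻¹ * Real.exp (-R ^ 2 / 2) := ⟨_, rfl⟩
  have hE0 : 0 < E0 := by rw [hE0def]; positivity
  have hττ : 0 < τ₂ - τ₁ := sub_pos.mpr hτ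
  obtain ⟨δ, hδdef⟩ : ∃ x : ℝ, x = (τ₂ - τ₁) * Real.exp (-B) := ⟨_, rfl⟩
  have hδ : 0 < δ := by rw [hδdef]; positivity
  obtain ⟨m, hmdef⟩ : ∃ x : ℝ, x = min 1 δ * E0 := ⟨_, rfl⟩
  have hm : 0 < m := by rw [hmdef]; exact mul_pos (lt_min one_pos hδ) hE0
  obtain ⟨K, hKdef⟩ : ∃ x : ℝ, x = (1 + B + T) * Real.exp B := ⟨_, rfl⟩
  have hK : 0 < K := by rw [hKdef]; positivity
  refine ⟨24 * K ^ 2 / m, div_pos (by nlinarith) hm, ?_⟩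
  intro r g rs gs hr hg hrs hgs
  have hτ1T : |τ₁| ≤ T := by rw [hTdef]; exact le_max_left _ _
  have hτ2T : |τ₂| ≤ T := by rw [hTdef]; exact le_max_right _ _
  -- bounds on the four CDF arguments
  have hx1 : |(r - τ₁) * Real.exp (-g)| ≤ R - 1 := by
    have := arg_bound hr hg hτ1T; rw [hRdef, hMbdef]; linarith
  have hx2 : |(r - τ₂) * Real.exp (-g)| ≤ R - 1 := by
    have := arg_bound hr hg hτ2T; rw [hRdef, hMbdef]; linarith
  have hy1 : |(rs - τ₁) * Real.exp (-gs)| ≤ R - 1 := by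
    have := arg_bound hrs hgs hτ1T; rw [hRdef, hMbdef]; linarith
  have hy2 : |(rs - τ₂) * Real.exp (-gs)| ≤ R - 1 := by
    have := arg_bound hrs hgs hτ2T; rw [hRdef, hMbdef]; linarith
  -- lower bounds on class probabilities
  have hmE : m ≤ E0 := by
    have h1 : min 1 δ ≤ 1 := min_le_left _ _
    rw [hmdef]; nlinarith
  have hmδ : m ≤ δ * E0 := by
    have h1 : min 1 δ ≤ δ := min_le_right _ _
    rw [hmdef]; nlinarith
  have middle : ∀ a b : ℝ, |a| ≤ B → |b| ≤ B →
      m ≤ stdGaussianCDF ((a - τ₁) * Real.exp (-b))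
            - stdGaussianCDF ((a - τ₂) * Real.exp (-b)) := by
    intro a b ha hb
    have ha1 : |(a - τ₁) * Real.exp (-b)| ≤ R - 1 := by
      have := arg_bound ha hb hτ1T; rw [hRdef, hMbdef]; linarith
    have ha2 : |(a - τ₂) * Real.exp (-b)| ≤ R - 1 := by
      have := arg_bound ha hb hτ2T; rw [hRdef, hMbdef]; linarith
    have hle : (a - τ₂) * Real.exp (-b) ≤ (a - τ₁) * Real.exp (-b) :=
      mul_le_mul_of_nonneg_right (by linarith) (Real.exp_pos _).le
    have hRpos : (0:ℝ) ≤ R := by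
      rw [hRdef, hMbdef]; positivity
    have hgap := cdf_gap (R := R) hle (by linarith [(abs_le.mp ha2).1]) (by linarith [(abs_le.mp ha1).2])
    have hdiff : δ ≤ (a - τ₁) * Real.exp (-b) - (a - τ₂) * Real.exp (-b) := by
      have heq : (a - τ₁) * Real.exp (-b) - (a - τ₂) * Real.exp (-b)
          = (τ₂ - τ₁) * Real.exp (-b) := by ring
      have hexp : Real.exp (-B) ≤ Real.exp (-b) :=
        Real.exp_le_exp.mpr (by linarith [(abs_le.mp hb).2])
      rw [heq, hδdef]
      exact mul_le_mul_of_nonneg_left hexp hττ.le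
    calc m ≤ δ * E0 := hmδ
      _ ≤ ((a - τ₁) * Real.exp (-b) - (a - τ₂) * Real.exp (-b)) * E0 := by nlinarith
      _ ≤ _ := by rw [hE0def]; linarith [hgap]
  have hq0 : m ≤ 1 - stdGaussianCDF ((r - τ₁) * Real.exp (-g)) :=
    le_trans hmE (by rw [hE0def]; exact lb_tail hx1)
  have hq2 : m ≤ stdGaussianCDF ((r - τ₂) * Real.exp (-g)) :=
    le_trans hmE (by rw [hE0def]; exact lb_cdf hx2)
  have hq1 := middle r g hr hg
  have hp0 : m ≤ 1 - stdGaussianCDF ((rs - τ₁) * Real.exp (-gs)) :=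
    le_trans hmE (by rw [hE0def]; exact lb_tail hy1)
  have hp2 : m ≤ stdGaussianCDF ((rs - τ₂) * Real.exp (-gs)) :=
    le_trans hmE (by rw [hE0def]; exact lb_cdf hy2)
  have hp1 := middle rs gs hrs hgs
  -- Lipschitz bounds
  obtain ⟨D, hDdef⟩ : ∃ x : ℝ, x = |r - rs| + |g - gs| := ⟨_, rfl⟩
  have hD : 0 ≤ D := by rw [hDdef]; positivity
  have hdd : ∀ τ : ℝ, |τ| ≤ T →
      |stdGaussianCDF ((rs - τ) * Real.exp (-gs)) - stdGaussianCDF ((r - τ) * Real.exp (-g))|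
        ≤ K * D := by
    intro τ hτT
    calc |stdGaussianCDF ((rs - τ) * Real.exp (-gs)) - stdGaussianCDF ((r - τ) * Real.exp (-g))|
        ≤ |(rs - τ) * Real.exp (-gs) - (r - τ) * Real.exp (-g)| := cdf_lip _ _
      _ ≤ (1 + B + |τ|) * Real.exp B * (|r - rs| + |g - gs|) := arg_lip hr hg hrs hgs
      _ ≤ K * D := by
          rw [hKdef, hDdef]
          have h1 : (1 + B + |τ|) * Real.exp B ≤ (1 + B + T) * Real.exp B :=
            mul_le_mul_of_nonneg_right (by linarith) (Real.exp_pos B).le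
          exact mul_le_mul_of_nonneg_right h1 (by positivity)
  have hd1 := hdd τ₁ hτ1T
  have hd2 := hdd τ₂ hτ2T
  -- combine
  rw [Fin.sum_univ_three]
  simp only [classProb]
  have hkl := kl_three hm hq0 hq1 hq2 hp0 hp1 hp2 hd1 hd2
  refine le_trans hkl ?_
  have hD2 : D ^ 2 ≤ 2 * ((r - rs) ^ 2 + (g - gs) ^ 2) := by
    rw [hDdef]
    nlinarith [sq_nonneg (|r - rs| - |g - gs|), sq_abs (r - rs), sq_abs (g - gs),
      abs_nonneg (r - rs), abs_nonneg (g - gs)]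
  have hnum : 12 * (K * D) ^ 2 ≤ 24 * K ^ 2 * ((r - rs) ^ 2 + (g - gs) ^ 2) := by
    nlinarith [sq_nonneg K]
  have heq : 24 * K ^ 2 / m * ((r - rs) ^ 2 + (g - gs) ^ 2)
      = (24 * K ^ 2 * ((r - rs) ^ 2 + (g - gs) ^ 2)) / m := by ring
  rw [heq]
  exact (div_le_div_iff_of_pos_right hm).mpr hnum
end
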